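/- arXiv:1912.10462 — 3 statements merged into one kernel-verified Lean document; each statement's English description precedes it below -/
import Mathlib

section
/- For every unit vector β in ℝ^d and every integer H ≥ 1, there exists a non-zero integer vector a in ℤ^d such that ‖a‖ ≤ (4d−3)^{1/2} H^{d−1} and |a/‖a‖ − β| ≤ 2(4d²−7d+3)^{1/2}/(‖a‖ H). -/
open Finset

lemma abs_sub_le_of_floor_mul_eq {H : ℕ} (hH : 1 ≤ H) {a b : ℝ}
    (h : ⌊a * H⌋ = ⌊b * H⌋) : |a - b| ≤ 1 / H := by
  have hH' : (0:ℝ) < H := by exact_mod_cast hH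
  rw [abs_sub_le_iff]
  constructor
  · have h1 : a * H < ⌊b * H⌋ + 1 := by rw [← h]; exact Int.lt_floor_add_one (a * H)
    have h2 : (⌊b * H⌋ : ℝ) ≤ b * H := Int.floor_le _
    rw [le_div_iff₀ hH']
    nlinarith
  · have h1 : b * H < ⌊a * H⌋ + 1 := by rw [h]; exact Int.lt_floor_add_one (b * H)
    have h2 : (⌊a * H⌋ : ℝ) ≤ a * H := Int.floor_le _
    rw [le_div_iff₀ hH']
    nlinarith

lemma dirichlet_simul {d : ℕ} (i0 : Fin d) (θ : Fin d → ℝ) (H : ℕ) (hH : 1 ≤ H) :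
    ∃ (q : ℕ) (p : Fin d → ℤ), 1 ≤ q ∧ q ≤ H ^ (d - 1) ∧
      ∀ j, j ≠ i0 → |(q : ℝ) * θ j - p j| ≤ 1 / H := by
  have hH' : (0:ℝ) < H := by exact_mod_cast hH
  set Q := H ^ (d - 1) with hQ
  set f : ℕ → Fin d → ℤ :=
    fun n j => if j = i0 then 0 else ⌊Int.fract ((n : ℝ) * θ j) * H⌋ with hf
  set T : Finset (Fin d → ℤ) :=
    Fintype.piFinset (fun j => if j = i0 then ({0} : Finset ℤ) else Finset.Ico 0 (H : ℤ)) with hT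
  have hmap : ∀ n ∈ Finset.range (Q + 1), f n ∈ T := by
    intro n _
    rw [hT, Fintype.mem_piFinset]
    intro j
    by_cases hj : j = i0
    · simp [hf, hj]
    · simp only [hf, hj, if_false, hT, eq_self_iff_true]
      rw [Finset.mem_Ico]
      have h0 := Int.fract_nonneg ((n : ℝ) * θ j)
      have h1 := Int.fract_lt_one ((n : ℝ) * θ j)
      constructor
      · exact Int.floor_nonneg.mpr (by positivity)
      · rw [Int.floor_lt]
        push_cast
        nlinarith
  have hcard : T.card < (Finset.range (Q + 1)).card := by
    rw [Finset.card_range, hT, Fintype.card_piFinset]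
    have : ∀ j : Fin d,
        ((if j = i0 then ({0} : Finset ℤ) else Finset.Ico 0 (H : ℤ))).card
          = if j = i0 then 1 else H := by
      intro j
      split_ifs
      · simp
      · rw [Int.card_Ico]; simp
    rw [Finset.prod_congr rfl (fun j _ => this j)]
    have hprod : (∏ j : Fin d, if j = i0 then 1 else H) = H ^ (d - 1) := by
      rw [← Finset.mul_prod_erase _ _ (Finset.mem_univ i0), if_pos rfl, one_mul]
      rw [Finset.prod_congr rfl (fun j hj => if_neg (Finset.mem_erase.mp hj).1)]
      rw [Finset.prod_const, Finset.card_erase_of_mem (Finset.mem_univ i0)]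
      simp
    rw [hprod, ← hQ]
    omega
  obtain ⟨x, hx, y, hy, hxy, hfxy⟩ :=
    Finset.exists_ne_map_eq_of_card_lt_of_maps_to hcard hmap
  have key : ∀ m M : ℕ, m < M → M ≤ Q → f m = f M →
      ∃ (q : ℕ) (p : Fin d → ℤ), 1 ≤ q ∧ q ≤ H ^ (d - 1) ∧
        ∀ j, j ≠ i0 → |(q : ℝ) * θ j - p j| ≤ 1 / H := by
    intro m M hmM hM heq
    refine ⟨M - m, fun j => ⌊(M : ℝ) * θ j⌋ - ⌊(m : ℝ) * θ j⌋, by omega, by omega, ?_⟩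
    intro j hj
    have heqj : ⌊Int.fract ((m : ℝ) * θ j) * H⌋ = ⌊Int.fract ((M : ℝ) * θ j) * H⌋ := by
      have := congrFun heq j
      simpa [hf, if_neg hj] using this
    have habs := abs_sub_le_of_floor_mul_eq hH heqj
    have hcast : ((M - m : ℕ) : ℝ) = (M : ℝ) - m := by
      push_cast [Nat.cast_sub hmM.le]; ring
    have : ((M - m : ℕ) : ℝ) * θ j - ((⌊(M : ℝ) * θ j⌋ - ⌊(m : ℝ) * θ j⌋ : ℤ) : ℝ)
        = Int.fract ((M : ℝ) * θ j) - Int.fract ((m : ℝ) * θ j) := by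
      rw [hcast, Int.fract, Int.fract]
      push_cast
      ring
    rw [this]
    rw [abs_sub_comm] at habs
    exact habs
  rcases lt_or_gt_of_ne hxy with h | h
  · exact key x y h (by simpa using Nat.lt_succ_iff.mp (Finset.mem_range.mp hy)) hfxy
  · exact key y x h (by simpa using Nat.lt_succ_iff.mp (Finset.mem_range.mp hx)) hfxy.symm

lemma sq_ineq_aux (x : ℝ) : x - 1 ≤ 4 * x ^ 2 - 7 * x + 3 := by
  nlinarith [sq_nonneg (x - 1)]

theorem dirichlet_direction {d : ℕ} (hd : 1 ≤ d) (β : EuclideanSpace ℝ (Fin d))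
    (hβ : ‖β‖ = 1) (H : ℕ) (hH : 1 ≤ H) :
    ∃ (a : Fin d → ℤ) (av : EuclideanSpace ℝ (Fin d)),
      a ≠ 0 ∧ (∀ i, av i = (a i : ℝ)) ∧
      ‖av‖ ≤ Real.sqrt (4 * d - 3) * (H : ℝ) ^ (d - 1) ∧
      ‖‖av‖⁻¹ • av - β‖ ≤ 2 * Real.sqrt (4 * d ^ 2 - 7 * d + 3) / (‖av‖ * H) := by
  have hH' : (0:ℝ) < H := by exact_mod_cast hH
  have hd' : (1:ℝ) ≤ d := by exact_mod_cast hd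
  haveI : Nonempty (Fin d) := ⟨⟨0, hd⟩⟩
  obtain ⟨i0, hi0⟩ := Finite.exists_max (fun j : Fin d => |β j|)
  set c := β i0 with hc
  have hc0 : c ≠ 0 := by
    intro h
    have hb0 : β = 0 := by
      ext j
      have h2 : |β j| ≤ |c| := hi0 j
      rw [h] at h2
      have h3 : β j = 0 := by simpa using h2
      simpa using h3
    rw [hb0, norm_zero] at hβ
    norm_num at hβ
  have hcpos : 0 < |c| := abs_pos.mpr hc0
  obtain ⟨q, p, hq1, hqQ, hp⟩ := dirichlet_simul i0 (fun j => β j / c) H hH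
  have hq1' : (1:ℝ) ≤ q := by exact_mod_cast hq1
  set ε : ℤ := if 0 < c then 1 else -1 with hε
  have hεc : (ε:ℝ) * c = |c| := by
    rw [hε]; split_ifs with h
    · simp [abs_of_pos h]
    · push_cast
      rw [abs_of_neg (lt_of_le_of_ne (not_lt.mp h) hc0)]; ring
  have hε2 : (ε:ℝ) * ε = 1 := by rw [hε]; split_ifs <;> norm_num
  have hεabs : (ε:ℝ) * |c| = c := by
    calc (ε:ℝ) * |c| = ε * (ε * c) := by rw [hεc]
    _ = (ε * ε) * c := by ring
    _ = c := by rw [hε2]; ring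
  set a : Fin d → ℤ := fun j => ε * (if j = i0 then (q:ℤ) else p j) with ha
  set av : EuclideanSpace ℝ (Fin d) := WithLp.toLp 2 (fun j => ((a j : ℝ))) with hav
  set t : ℝ := (q:ℝ) / |c| with htdef
  have ht : 0 < t := by positivity
  -- key identity
  have hεdiv : (ε:ℝ) / c = 1 / |c| := by
    rw [div_eq_div_iff hc0 hcpos.ne']
    linear_combination hεabs
  have key : ∀ j, t * β j = (ε:ℝ) * ((q:ℝ) * (β j / c)) := by
    intro j
    calc t * β j = (q:ℝ) * β j * (1 / |c|) := by rw [htdef]; ring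
      _ = (q:ℝ) * β j * ((ε:ℝ) / c) := by rw [hεdiv]
      _ = (ε:ℝ) * ((q:ℝ) * (β j / c)) := by ring
  have hdiff : ∀ j, |av j - t * β j| ≤ if j = i0 then (0:ℝ) else 1 / (H:ℝ) := by
    intro j
    by_cases hj : j = i0
    · rw [if_pos hj, hj]
      have : av i0 = (ε:ℝ) * q := by simp [hav, ha]
      rw [this, key i0]
      have : β i0 / c = 1 := div_self hc0
      rw [this]
      simp
    · rw [if_neg hj]
      have h1 : av j = (ε:ℝ) * p j := by simp [hav, ha, if_neg hj]
      rw [h1, key j]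
      have : (ε:ℝ) * (p j) - ε * ((q:ℝ) * (β j / c))
          = ε * ((p j : ℝ) - (q:ℝ) * (β j / c)) := by ring
      rw [this, abs_mul]
      have hεa : |(ε:ℝ)| = 1 := by rw [hε]; split_ifs <;> norm_num
      rw [hεa, one_mul, abs_sub_comm]
      exact hp j hj
  -- norm of av - t • β
  have hnorm1 : ‖av - t • β‖ ≤ Real.sqrt ((d:ℝ) - 1) / H := by
    rw [EuclideanSpace.norm_eq]
    have hle : ∀ j : Fin d, ‖(av - t • β) j‖ ^ 2 ≤ (if j = i0 then 0 else (1/(H:ℝ))^2) := by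
      intro j
      have hap : (av - t • β) j = av j - t * β j := rfl
      rw [hap, Real.norm_eq_abs]
      by_cases hj : j = i0
      · rw [if_pos hj]
        have := hdiff j
        rw [if_pos hj] at this
        have h0 : |av j - t * β j| = 0 := le_antisymm this (abs_nonneg _)
        rw [h0]; norm_num
      · rw [if_neg hj]
        have := hdiff j
        rw [if_neg hj] at this
        have h0 : (0:ℝ) ≤ |av j - t * β j| := abs_nonneg _
        nlinarith
    have hsum : ∑ j, ‖(av - t • β) j‖ ^ 2 ≤ ((d:ℝ) - 1) * (1/(H:ℝ))^2 := by
      calc ∑ j, ‖(av - t • β) j‖ ^ 2 ≤ ∑ j : Fin d, (if j = i0 then 0 else (1/(H:ℝ))^2) :=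
            Finset.sum_le_sum (fun j _ => hle j)
        _ = ((d:ℝ) - 1) * (1/(H:ℝ))^2 := by
            rw [← Finset.add_sum_erase _ _ (Finset.mem_univ i0), if_pos rfl, zero_add]
            rw [Finset.sum_congr rfl (fun j hj => if_neg (Finset.mem_erase.mp hj).1)]
            rw [Finset.sum_const, Finset.card_erase_of_mem (Finset.mem_univ i0)]
            simp only [Finset.card_univ, Fintype.card_fin, nsmul_eq_mul]
            rw [Nat.cast_sub hd]
            norm_num
    calc Real.sqrt (∑ j, ‖(av - t • β) j‖ ^ 2) ≤ Real.sqrt (((d:ℝ) - 1) * (1/(H:ℝ))^2) :=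
          Real.sqrt_le_sqrt hsum
      _ = Real.sqrt ((d:ℝ) - 1) / H := by
          rw [Real.sqrt_mul (by linarith), Real.sqrt_sq (by positivity)]
          ring
  -- norm upper bound for av
  have hpb : ∀ j, j ≠ i0 → |(p j : ℝ)| ≤ 2 * q := by
    intro j hj
    have h1 := hp j hj
    have h2 : |(q:ℝ) * (β j / c)| ≤ q := by
      rw [abs_mul]
      have : |β j / c| ≤ 1 := by
        rw [abs_div, div_le_one hcpos]
        exact hi0 j
      calc |(q:ℝ)| * |β j / c| ≤ |(q:ℝ)| * 1 := by
            exact mul_le_mul_of_nonneg_left this (abs_nonneg _)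
        _ = q := by rw [mul_one, abs_of_nonneg (by positivity)]
    have h3 : (1:ℝ)/H ≤ 1 := by
      rw [div_le_one hH']; exact_mod_cast hH
    calc |(p j : ℝ)| = |((p j : ℝ) - (q:ℝ) * (β j / c)) + (q:ℝ) * (β j / c)| := by ring_nf
      _ ≤ |(p j : ℝ) - (q:ℝ) * (β j / c)| + |(q:ℝ) * (β j / c)| := abs_add_le _ _
      _ ≤ 1/H + q := by rw [abs_sub_comm]; exact add_le_add h1 h2
      _ ≤ 2 * q := by linarith
  have hnorm2 : ‖av‖ ≤ Real.sqrt (4 * (d:ℝ) - 3) * q := by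
    rw [EuclideanSpace.norm_eq]
    have hle : ∀ j : Fin d, ‖av j‖ ^ 2 ≤ (if j = i0 then ((q:ℝ))^2 else (2*(q:ℝ))^2) := by
      intro j
      rw [Real.norm_eq_abs]
      by_cases hj : j = i0
      · rw [if_pos hj, hj]
        have h1 : av i0 = (ε:ℝ) * q := by simp [hav, ha]
        rw [h1, abs_mul]
        have hεa : |(ε:ℝ)| = 1 := by rw [hε]; split_ifs <;> norm_num
        rw [hεa, one_mul, sq_abs]
      · rw [if_neg hj]
        have h1 : av j = (ε:ℝ) * p j := by simp [hav, ha, if_neg hj]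
        rw [h1, abs_mul]
        have hεa : |(ε:ℝ)| = 1 := by rw [hε]; split_ifs <;> norm_num
        rw [hεa, one_mul]
        have := hpb j hj
        nlinarith [abs_nonneg ((p j : ℝ))]
    have hsum : ∑ j, ‖av j‖ ^ 2 ≤ (4 * (d:ℝ) - 3) * (q:ℝ)^2 := by
      calc ∑ j, ‖av j‖ ^ 2 ≤ ∑ j : Fin d, (if j = i0 then ((q:ℝ))^2 else (2*(q:ℝ))^2) :=
            Finset.sum_le_sum (fun j _ => hle j)
        _ = ((q:ℝ))^2 + ((d:ℝ) - 1) * (2*(q:ℝ))^2 := by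
            rw [← Finset.add_sum_erase _ _ (Finset.mem_univ i0), if_pos rfl]
            rw [Finset.sum_congr rfl (fun j hj => if_neg (Finset.mem_erase.mp hj).1)]
            rw [Finset.sum_const, Finset.card_erase_of_mem (Finset.mem_univ i0)]
            simp only [Finset.card_univ, Fintype.card_fin, nsmul_eq_mul]
            rw [Nat.cast_sub hd]
            norm_num
        _ = (4 * (d:ℝ) - 3) * (q:ℝ)^2 := by ring
    calc Real.sqrt (∑ j, ‖av j‖ ^ 2) ≤ Real.sqrt ((4 * (d:ℝ) - 3) * (q:ℝ)^2) :=
          Real.sqrt_le_sqrt hsum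
      _ = Real.sqrt (4 * (d:ℝ) - 3) * q := by
          rw [Real.sqrt_mul (by linarith), Real.sqrt_sq (by positivity)]
  -- nonzero
  have havi0 : av i0 = (ε:ℝ) * q := by simp [hav, ha]
  have havne : av ≠ 0 := by
    intro h
    have : av i0 = 0 := by rw [h]; rfl
    rw [havi0] at this
    have hεne : (ε:ℝ) ≠ 0 := by rw [hε]; split_ifs <;> norm_num
    have : (q:ℝ) = 0 := by
      rcases mul_eq_zero.mp this with h' | h'
      · exact absurd h' hεne
      · exact h'
    linarith
  have hu : 0 < ‖av‖ := norm_pos_iff.mpr havne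
  have hane : a ≠ 0 := by
    intro h
    apply havne
    ext j
    rw [hav]
    show ((a j : ℝ)) = 0
    rw [h]
    norm_num
  refine ⟨a, av, hane, fun i => rfl, ?_, ?_⟩
  · calc ‖av‖ ≤ Real.sqrt (4 * (d:ℝ) - 3) * q := hnorm2
      _ ≤ Real.sqrt (4 * (d:ℝ) - 3) * (H:ℝ) ^ (d-1) := by
          have : (q:ℝ) ≤ (H:ℝ) ^ (d-1) := by exact_mod_cast hqQ
          exact mul_le_mul_of_nonneg_left this (Real.sqrt_nonneg _)
  · set u := ‖av‖ with hudef
    have hβt : ‖t • β‖ = t := by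
      rw [norm_smul, hβ, mul_one, Real.norm_eq_abs, abs_of_pos ht]
    have htu : |t - u| ≤ ‖av - t • β‖ := by
      have h1 := abs_norm_sub_norm_le (t • β) av
      rw [hβt, ← norm_neg (t • β - av)] at h1
      simpa [neg_sub] using h1
    have hmain : ‖u⁻¹ • av - β‖ ≤ 2 * ‖av - t • β‖ / u := by
      have hrw : u⁻¹ • av - β = u⁻¹ • (av - t • β) + (u⁻¹ * t - 1) • β := by
        rw [smul_sub, sub_smul, one_smul, smul_smul]
        abel
      calc ‖u⁻¹ • av - β‖ = ‖u⁻¹ • (av - t • β) + (u⁻¹ * t - 1) • β‖ := by rw [hrw]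
        _ ≤ ‖u⁻¹ • (av - t • β)‖ + ‖(u⁻¹ * t - 1) • β‖ := norm_add_le _ _
        _ = u⁻¹ * ‖av - t • β‖ + |u⁻¹ * t - 1| := by
            rw [norm_smul, norm_smul, hβ, mul_one, Real.norm_eq_abs, Real.norm_eq_abs,
              abs_of_pos (inv_pos.mpr hu)]
        _ ≤ u⁻¹ * ‖av - t • β‖ + u⁻¹ * |t - u| := by
            have heq2 : |u⁻¹ * t - 1| = u⁻¹ * |t - u| := by
              have hh : u⁻¹ * t - 1 = u⁻¹ * (t - u) := by
                rw [mul_sub, inv_mul_cancel₀ hu.ne']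
              rw [hh, abs_mul, abs_of_pos (inv_pos.mpr hu)]
            rw [heq2]
        _ ≤ u⁻¹ * ‖av - t • β‖ + u⁻¹ * ‖av - t • β‖ := by
            have := mul_le_mul_of_nonneg_left htu (le_of_lt (inv_pos.mpr hu))
            linarith
        _ = 2 * ‖av - t • β‖ / u := by field_simp; ring
    calc ‖u⁻¹ • av - β‖ ≤ 2 * ‖av - t • β‖ / u := hmain
      _ ≤ 2 * (Real.sqrt ((d:ℝ) - 1) / H) / u := by
          gcongr
      _ = 2 * Real.sqrt ((d:ℝ) - 1) / (u * H) := by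
          rw [mul_div_assoc', div_div, mul_comm (H:ℝ) u]
      _ ≤ 2 * Real.sqrt (4 * (d:ℝ)^2 - 7 * d + 3) / (u * H) := by
          have hsq : Real.sqrt ((d:ℝ) - 1) ≤ Real.sqrt (4 * (d:ℝ)^2 - 7 * d + 3) :=
            Real.sqrt_le_sqrt (sq_ineq_aux (d:ℝ))
          have hup : (0:ℝ) ≤ u * H := by positivity
          exact div_le_div_of_nonneg_right (by linarith) hup
end

section
/- Let β ∈ ℝ^d be a unit vector with s rational quotients, 1 ≤ s ≤ d−2, and let H ≥ 1 be an integer. Then there exists a non-zero a ∈ ℤ^d and a constant C(β) > 0 (depending only on β, not on H) such that ‖a‖ ≤ C(β) H^{d−1−s} and |a/‖a‖ − β| ≤ C(β)/(‖a‖H). -/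
lemma floor_eq_imp_abs_sub_lt {H : ℕ} (hH : 1 ≤ H) {u v : ℝ}
    (h : ⌊(H:ℝ) * u⌋ = ⌊(H:ℝ) * v⌋) : |u - v| < 1 / H := by
  have hH0 : (0:ℝ) < H := by exact_mod_cast hH
  have h1 : |(H:ℝ) * u - (H:ℝ) * v| < 1 := by
    have a1 := Int.floor_le ((H:ℝ) * u)
    have a2 := Int.lt_floor_add_one ((H:ℝ) * u)
    have b1 := Int.floor_le ((H:ℝ) * v)
    have b2 := Int.lt_floor_add_one ((H:ℝ) * v)
    rw [h] at a1 a2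
    rw [abs_sub_lt_iff]
    constructor <;> linarith
  rw [← mul_sub, abs_mul, abs_of_pos hH0] at h1
  rw [lt_div_iff₀ hH0]
  linarith [h1]

lemma dirichlet_sim {ι : Type*} [Fintype ι] (θ : ι → ℝ) (H : ℕ) (hH : 1 ≤ H) :
    ∃ q : ℕ, 1 ≤ q ∧ q ≤ H ^ (Fintype.card ι) ∧ ∀ i, ∃ p : ℤ, |(q:ℝ) * θ i - p| ≤ 1 / H := by
  classical
  have hH0 : (0:ℝ) < H := by exact_mod_cast hH
  set N := H ^ Fintype.card ι with hN
  have hfr : ∀ (x : ℝ), (⌊(H:ℝ) * Int.fract x⌋).toNat < H := by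
    intro x
    have h0 : (0:ℝ) ≤ (H:ℝ) * Int.fract x := mul_nonneg hH0.le (Int.fract_nonneg x)
    have h1 : (H:ℝ) * Int.fract x < H := by nlinarith [Int.fract_lt_one x]
    have h2 : ⌊(H:ℝ) * Int.fract x⌋ < (H:ℤ) := by
      rw [Int.floor_lt]; exact_mod_cast h1
    have h3 : (0:ℤ) ≤ ⌊(H:ℝ) * Int.fract x⌋ := Int.floor_nonneg.mpr h0
    omega
  set f : Fin (N+1) → (ι → Fin H) := fun j i => ⟨(⌊(H:ℝ) * Int.fract (j * θ i)⌋).toNat, hfr _⟩ with hf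
  have hcard : Fintype.card (ι → Fin H) < Fintype.card (Fin (N+1)) := by
    simp [Fintype.card_fun, hN]
  obtain ⟨j1, j2, hne, heq⟩ := Fintype.exists_ne_map_eq_of_card_lt f hcard
  have key : ∀ j1 j2 : Fin (N+1), j1 < j2 → f j1 = f j2 →
      ∃ q : ℕ, 1 ≤ q ∧ q ≤ N ∧ ∀ i, ∃ p : ℤ, |(q:ℝ) * θ i - p| ≤ 1 / H := by
    intro j1 j2 hlt hfeq
    refine ⟨j2.val - j1.val, by omega, by omega, fun i => ?_⟩
    refine ⟨⌊(j2:ℝ) * θ i⌋ - ⌊(j1:ℝ) * θ i⌋, ?_⟩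
    have hfl : ⌊(H:ℝ) * Int.fract ((j1:ℝ) * θ i)⌋ = ⌊(H:ℝ) * Int.fract ((j2:ℝ) * θ i)⌋ := by
      have := congrFun hfeq i
      simp only [hf, Fin.mk.injEq] at this
      have h1 : (0:ℤ) ≤ ⌊(H:ℝ) * Int.fract ((j1:ℝ) * θ i)⌋ :=
        Int.floor_nonneg.mpr (mul_nonneg hH0.le (Int.fract_nonneg _))
      have h2 : (0:ℤ) ≤ ⌊(H:ℝ) * Int.fract ((j2:ℝ) * θ i)⌋ :=
        Int.floor_nonneg.mpr (mul_nonneg hH0.le (Int.fract_nonneg _))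
      omega
    have habs := floor_eq_imp_abs_sub_lt hH hfl.symm
    have hcast : ((j2.val - j1.val : ℕ) : ℝ) = (j2:ℝ) - (j1:ℝ) := by
      have : j1.val ≤ j2.val := le_of_lt hlt
      push_cast [this]; ring
    have hfract : ∀ x : ℝ, Int.fract x = x - ⌊x⌋ := fun x => rfl
    have : ((j2.val - j1.val : ℕ) : ℝ) * θ i - ((⌊(j2:ℝ) * θ i⌋ - ⌊(j1:ℝ) * θ i⌋ : ℤ) : ℝ)
        = Int.fract ((j2:ℝ) * θ i) - Int.fract ((j1:ℝ) * θ i) := by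
      rw [hcast, hfract, hfract]; push_cast; ring
    rw [this]
    exact le_of_lt habs
  rcases hne.lt_or_gt with h | h
  · exact key j1 j2 h heq
  · exact key j2 j1 h heq.symm

lemma norm_le_of_coord {d : ℕ} (x : EuclideanSpace ℝ (Fin d)) {ε : ℝ} (hε : 0 ≤ ε)
    (h : ∀ i, |x i| ≤ ε) : ‖x‖ ≤ Real.sqrt d * ε := by
  rw [EuclideanSpace.norm_eq]
  have hsum : ∑ i, ‖x i‖^2 ≤ (d : ℝ) * ε^2 := by
    calc ∑ i, ‖x i‖^2 ≤ ∑ _i : Fin d, ε^2 := Finset.sum_le_sum (fun i _ => by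
          have hi := h i
          have := abs_nonneg (x i)
          rw [Real.norm_eq_abs]; nlinarith)
      _ = (d : ℝ) * ε^2 := by simp [Finset.sum_const, mul_comm]
  calc Real.sqrt (∑ i, ‖x i‖^2) ≤ Real.sqrt ((d:ℝ) * ε^2) := Real.sqrt_le_sqrt hsum
    _ = Real.sqrt d * ε := by
        rw [Real.sqrt_mul (by positivity), Real.sqrt_sq hε]

theorem rational_quotients_dirichlet {d s : ℕ} (hs1 : 1 ≤ s) (hs2 : s ≤ d - 2) (hd : 2 ≤ d)
    (β : EuclideanSpace ℝ (Fin d)) (hβ : ‖β‖ = 1)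
    (hrat : ∃ k : ℝ, k ≠ 0 ∧
      Set.ncard {i : Fin d | ∃ q : ℚ, k * β i = (q : ℝ)} = s + 1)
    (hmax : ∀ k : ℝ, k ≠ 0 →
      Set.ncard {i : Fin d | ∃ q : ℚ, k * β i = (q : ℝ)} ≤ s + 1) :
    ∃ C : ℝ, 0 < C ∧ ∀ H : ℕ, 1 ≤ H →
      ∃ (a : Fin d → ℤ) (av : EuclideanSpace ℝ (Fin d)),
        a ≠ 0 ∧ (∀ i, av i = (a i : ℝ)) ∧
        ‖av‖ ≤ C * (H : ℝ) ^ (d - 1 - s) ∧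
        ‖‖av‖⁻¹ • av - β‖ ≤ C / (‖av‖ * H) := by
  classical
  obtain ⟨k, hk0, hScard⟩ := hrat
  set S : Set (Fin d) := {i : Fin d | ∃ q : ℚ, k * β i = (q : ℝ)} with hSdef
  -- choose rational values
  have hrS : ∀ i, ∃ q : ℚ, i ∈ S → k * β i = (q : ℝ) := by
    intro i
    by_cases hi : i ∈ S
    · obtain ⟨q, hq⟩ := hi; exact ⟨q, fun _ => hq⟩
    · exact ⟨0, fun h => absurd h hi⟩
  choose r hr using hrS
  set D : ℕ := ∏ i : Fin d, (r i).den with hDdef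
  have hD1 : 1 ≤ D := by
    rw [hDdef]
    exact Finset.one_le_prod' (fun i _ => (r i).pos)
  have hDdvd : ∀ i, (r i).den ∣ D := fun i => Finset.dvd_prod_of_mem _ (Finset.mem_univ i)
  have hint : ∀ i ∈ S, ∃ m : ℤ, (D:ℝ) * (k * β i) = (m : ℝ) := by
    intro i hi
    obtain ⟨c, hc⟩ := hDdvd i
    refine ⟨(r i).num * c, ?_⟩
    rw [hr i hi]
    have hden : ((r i).den : ℝ) ≠ 0 := by exact_mod_cast (r i).den_nz
    have hcast : ((r i : ℝ)) = ((r i).num : ℝ) / ((r i).den : ℝ) := Rat.cast_def _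
    rw [hcast, hc]
    push_cast
    field_simp
  -- scale up
  have ht0 : (D:ℝ) * k ≠ 0 := by
    have : (D:ℝ) ≠ 0 := by positivity
    exact mul_ne_zero this hk0
  obtain ⟨M, hM⟩ := exists_nat_ge ((Real.sqrt d + 1) / |(D:ℝ) * k|)
  set t : ℝ := (M:ℝ) * |(D:ℝ) * k| with htdef
  have habs0 : 0 < |(D:ℝ) * k| := abs_pos.mpr ht0
  have hsd : 0 ≤ Real.sqrt d := Real.sqrt_nonneg d
  have ht : Real.sqrt d + 1 ≤ t := by
    rw [htdef]
    calc Real.sqrt d + 1 = ((Real.sqrt d + 1) / |(D:ℝ) * k|) * |(D:ℝ) * k| := by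
          field_simp
      _ ≤ (M:ℝ) * |(D:ℝ) * k| := by
          apply mul_le_mul_of_nonneg_right hM habs0.le
  have htpos : 0 < t := by linarith
  -- integrality of t * β i on S
  have hz' : ∀ i, ∃ z : ℤ, i ∈ S → t * β i = (z : ℝ) := by
    intro i
    by_cases hi : i ∈ S
    · obtain ⟨m, hm⟩ := hint i hi
      rcases abs_choice ((D:ℝ) * k) with h | h
      · refine ⟨M * m, fun _ => ?_⟩
        rw [htdef, h]
        push_cast
        linear_combination (M:ℝ) * hm
      · refine ⟨-(M * m), fun _ => ?_⟩
        rw [htdef, h]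
        push_cast
        linear_combination (-(M:ℝ)) * hm
    · exact ⟨0, fun h => absurd h hi⟩
  choose z hz using hz'
  -- cardinality of complement
  have hfin : Fintype.card (↥(Sᶜ)) = d - 1 - s := by
    have h1 : S.ncard + Sᶜ.ncard = d := by
      rw [Set.ncard_add_ncard_compl]
      simp [Nat.card_eq_fintype_card]
    have h2 : Fintype.card (↥(Sᶜ)) = Sᶜ.ncard := by
      rw [← Nat.card_coe_set_eq, Nat.card_eq_fintype_card]
    omega
  -- constant
  refine ⟨t + 2 * Real.sqrt d, by linarith, fun H hH => ?_⟩
  have hH0 : (0:ℝ) < H := by exact_mod_cast hH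
  have hH1 : (1:ℝ) ≤ H := by exact_mod_cast hH
  -- Dirichlet
  obtain ⟨q, hq1, hqN, hp'⟩ := dirichlet_sim (ι := ↥(Sᶜ)) (fun i => t * β i) H hH
  choose p hp using hp'
  set a : Fin d → ℤ := fun i => if hi : i ∈ S then q * z i else p ⟨i, hi⟩ with hadef
  set av : EuclideanSpace ℝ (Fin d) := WithLp.toLp 2 (fun i => (a i : ℝ)) with havdef
  have havi : ∀ i, av i = (a i : ℝ) := fun i => rfl
  set w : ℝ := (q:ℝ) * t with hwdef
  have hq1' : (1:ℝ) ≤ (q:ℝ) := by exact_mod_cast hq1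
  have hw : Real.sqrt d + 1 ≤ w := by
    calc Real.sqrt d + 1 ≤ t := ht
      _ = 1 * t := (one_mul t).symm
      _ ≤ (q:ℝ) * t := mul_le_mul_of_nonneg_right hq1' htpos.le
  have hwpos : 0 < w := by linarith
  -- coordinatewise bound
  have hcoord : ∀ i, |(av - w • β) i| ≤ 1 / H := by
    intro i
    have hdiff : (av - w • β) i = (a i : ℝ) - w * β i := by
      simp [havdef, PiLp.sub_apply, PiLp.smul_apply, smul_eq_mul]
    rw [hdiff]
    by_cases hi : i ∈ S
    · have : (a i : ℝ) = w * β i := by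
        rw [hadef]
        simp only [dif_pos hi]
        push_cast
        rw [← hz i hi, hwdef]
        ring
      rw [this]
      simp
    · have hpi := hp ⟨i, hi⟩
      have heq : (a i : ℝ) - w * β i = -((q:ℝ) * (t * β i) - (p ⟨i, hi⟩ : ℝ)) := by
        simp only [hadef, dif_neg hi, hwdef]
        ring
      rw [heq, abs_neg]
      exact hpi
  have hδ : ‖av - w • β‖ ≤ Real.sqrt d * (1 / H) :=
    norm_le_of_coord _ (by positivity) hcoord
  have hδ' : ‖av - w • β‖ ≤ Real.sqrt d := by
    have : Real.sqrt d * (1 / H) ≤ Real.sqrt d * 1 := by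
      apply mul_le_mul_of_nonneg_left _ hsd
      rw [div_le_one hH0]; exact hH1
    linarith
  have hwβ : ‖w • β‖ = w := by
    rw [norm_smul, hβ, mul_one, Real.norm_eq_abs, abs_of_pos hwpos]
  have hrlow : w - Real.sqrt d ≤ ‖av‖ := by
    have h1 : ‖w • β‖ - ‖av‖ ≤ ‖w • β - av‖ := norm_sub_norm_le _ _
    rw [norm_sub_rev] at h1
    rw [hwβ] at h1
    linarith
  have hrpos : (0:ℝ) < ‖av‖ := by linarith
  have ha0 : a ≠ 0 := by
    intro h
    have : av = 0 := by
      ext i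
      simp [havdef, h]
    rw [this, norm_zero] at hrpos
    exact lt_irrefl 0 hrpos
  refine ⟨a, av, ha0, havi, ?_, ?_⟩
  · -- norm upper bound
    have hqR : (q:ℝ) ≤ (H:ℝ) ^ (d - 1 - s) := by
      rw [← hfin]
      exact_mod_cast hqN
    have hHpow : (1:ℝ) ≤ (H:ℝ) ^ (d - 1 - s) := one_le_pow₀ hH1
    have hup : ‖av‖ ≤ w + Real.sqrt d := by
      have h1 : ‖av‖ ≤ ‖w • β‖ + ‖av - w • β‖ := by
        have := norm_add_le (w • β) (av - w • β)
        simpa using this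
      rw [hwβ] at h1
      linarith
    set P : ℝ := (H:ℝ) ^ (d - 1 - s) with hPdef
    have e1 : (q:ℝ) * t ≤ P * t := mul_le_mul_of_nonneg_right hqR htpos.le
    have e2 : Real.sqrt d ≤ Real.sqrt d * P := le_mul_of_one_le_right hsd hHpow
    have e3 : 0 ≤ Real.sqrt d * P := le_trans hsd e2
    have e4 : (t + 2 * Real.sqrt d) * P = t * P + Real.sqrt d * P + Real.sqrt d * P := by ring
    rw [e4]
    have e5 : P * t = t * P := mul_comm _ _
    linarith
  · -- approximation bound
    have hkey : ‖‖av‖⁻¹ • av - β‖ = ‖av‖⁻¹ * ‖av - ‖av‖ • β‖ := by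
      rw [show ‖av‖⁻¹ • av - β = ‖av‖⁻¹ • (av - ‖av‖ • β) by
        rw [smul_sub, smul_smul, inv_mul_cancel₀ hrpos.ne', one_smul]]
      rw [norm_smul, Real.norm_eq_abs, abs_of_pos (inv_pos.mpr hrpos)]
    rw [hkey]
    have hwr : |w - ‖av‖| ≤ ‖av - w • β‖ := by
      have h1 : |‖w • β‖ - ‖av‖| ≤ ‖w • β - av‖ := abs_norm_sub_norm_le _ _
      rw [norm_sub_rev, hwβ] at h1
      exact h1
    have h2 : ‖av - ‖av‖ • β‖ ≤ 2 * (Real.sqrt d * (1 / H)) := by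
      calc ‖av - ‖av‖ • β‖ ≤ ‖av - w • β‖ + ‖w • β - ‖av‖ • β‖ := by
            have := norm_add_le (av - w • β) (w • β - ‖av‖ • β)
            simpa using this
        _ = ‖av - w • β‖ + |w - ‖av‖| := by
            rw [show w • β - ‖av‖ • β = (w - ‖av‖) • β by rw [sub_smul],
              norm_smul, hβ, mul_one, Real.norm_eq_abs]
        _ ≤ 2 * ‖av - w • β‖ := by linarith
        _ ≤ 2 * (Real.sqrt d * (1 / H)) := by linarith
    have h3 : ‖av‖⁻¹ * ‖av - ‖av‖ • β‖ ≤ ‖av‖⁻¹ * (2 * (Real.sqrt d * (1 / H))) :=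
      mul_le_mul_of_nonneg_left h2 (inv_pos.mpr hrpos).le
    calc ‖av‖⁻¹ * ‖av - ‖av‖ • β‖ ≤ ‖av‖⁻¹ * (2 * (Real.sqrt d * (1 / H))) := h3
      _ = (2 * Real.sqrt d) / (‖av‖ * H) := by
          field_simp
      _ ≤ (t + 2 * Real.sqrt d) / (‖av‖ * H) := by
          gcongr
          linarith
end

section
/- Let R > 0, let β be a unit vector in ℝ^d, let S be the spherical segment on RS^{d−1} of direction β with cap radii r₂ < r₁ ≤ 2R, and let a ∈ ℤ^d be non-zero making angle φ with β, where δ = 2 sin(φ/2) satisfies Rδ ≤ r₂. Then S is contained in the spherical segment S' of direction a/‖a‖ with cap radii r₂' = r₂ − Rδ and r₁' = (r₁² + 2Rr₁δ + R²δ²)^{1/2}, and the height of S' equals h' = (r₁'² − r₂'²)/(2R) = (r₁² − r₂²)/(2R) + δ(r₁ + r₂). -/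
theorem segment_covered_by_rational_segment {d : ℕ} (R r1 r2 δ : ℝ) (hR : 0 < R)
    (hr2 : 0 ≤ r2) (hr21 : r2 < r1) (hr1 : r1 ≤ 2 * R)
    (β : EuclideanSpace ℝ (Fin d)) (hβ : ‖β‖ = 1)
    (a : Fin d → ℤ) (ha : a ≠ 0)
    (av : EuclideanSpace ℝ (Fin d)) (hav : ∀ i, av i = (a i : ℝ))
    (hδ : δ = ‖β - ‖av‖⁻¹ • av‖) (hδr : R * δ ≤ r2) :
    (({x : EuclideanSpace ℝ (Fin d) | ‖x‖ = R ∧ ‖x - R • β‖ ≤ r1} \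
      {x : EuclideanSpace ℝ (Fin d) | ‖x‖ = R ∧ ‖x - R • β‖ ≤ r2}) ⊆
     ({x : EuclideanSpace ℝ (Fin d) | ‖x‖ = R ∧
        ‖x - R • (‖av‖⁻¹ • av)‖ ≤ Real.sqrt (r1 ^ 2 + 2 * R * r1 * δ + R ^ 2 * δ ^ 2)} \
      {x : EuclideanSpace ℝ (Fin d) | ‖x‖ = R ∧
        ‖x - R • (‖av‖⁻¹ • av)‖ ≤ r2 - R * δ})) ∧
    ((Real.sqrt (r1 ^ 2 + 2 * R * r1 * δ + R ^ 2 * δ ^ 2) ^ 2 - (r2 - R * δ) ^ 2) / (2 * R)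
      = (r1 ^ 2 - r2 ^ 2) / (2 * R) + δ * (r1 + r2)) := by
  have hδ0 : 0 ≤ δ := hδ ▸ norm_nonneg _
  have hr10 : 0 ≤ r1 := le_of_lt (lt_of_le_of_lt hr2 hr21)
  have hsum : 0 ≤ r1 + R * δ := by positivity
  have hsq : r1 ^ 2 + 2 * R * r1 * δ + R ^ 2 * δ ^ 2 = (r1 + R * δ) ^ 2 := by ring
  have hsqrt : Real.sqrt (r1 ^ 2 + 2 * R * r1 * δ + R ^ 2 * δ ^ 2) = r1 + R * δ := by
    rw [hsq, Real.sqrt_sq hsum]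
  have hdist : ‖R • β - R • (‖av‖⁻¹ • av)‖ = R * δ := by
    rw [← smul_sub, norm_smul, Real.norm_eq_abs, abs_of_pos hR, ← hδ]
  constructor
  · rintro x ⟨⟨hxR, hx1⟩, hx2⟩
    simp only [Set.mem_setOf_eq, not_and] at hx2
    have hx2' : r2 < ‖x - R • β‖ := lt_of_not_ge (hx2 hxR)
    constructor
    · refine ⟨hxR, ?_⟩
      rw [hsqrt]
      calc ‖x - R • (‖av‖⁻¹ • av)‖
          ≤ ‖x - R • β‖ + ‖R • β - R • (‖av‖⁻¹ • av)‖ := by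
            simpa using norm_sub_le_norm_sub_add_norm_sub x (R • β) (R • (‖av‖⁻¹ • av))
        _ ≤ r1 + R * δ := by rw [hdist]; linarith
    · simp only [Set.mem_setOf_eq, not_and, not_le]
      intro _
      have := norm_sub_le_norm_sub_add_norm_sub x (R • (‖av‖⁻¹ • av)) (R • β)
      have h2 : ‖R • (‖av‖⁻¹ • av) - R • β‖ = R * δ := by
        rw [← hdist, norm_sub_rev]
      linarith
  · rw [hsqrt]; field_simp; ring
end
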